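/- Let b_r, b_{r+1}, b_{r+2}, b_{r+3} be distinct nonzero complex numbers, and suppose L_r is Δ_r-normal of type (T1) with parameters x_r, y_r ∈ ℂ∖{0} and L_{r+1} is Δ_{r+1}-normal of type (T1) with parameters x_{r+1}, y_{r+1} ∈ ℂ∖{0}. Then the subspace P_{1,1}(L_r) of M_2(ℂ) cannot equal the subspace P_{3,3}(L_{r+1}); i.e., two adjacent cross-sections cannot both be of type (T1). -/

import Mathlib

/-- `b_Δ(1) = 1/b₃ - 1/b₂`. -/
noncomputable def bD1 (b₁ b₂ b₃ : ℂ) : ℂ := 1 / b₃ - 1 / b₂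
/-- `b_Δ(2) = 1/b₃ - 1/b₁`. -/
noncomputable def bD2 (b₁ b₂ b₃ : ℂ) : ℂ := 1 / b₃ - 1 / b₁
/-- `b_Δ(3) = 1/b₂ - 1/b₁`. -/
noncomputable def bD3 (b₁ b₂ b₃ : ℂ) : ℂ := 1 / b₂ - 1 / b₁

/-- The five canonical generators of a type (T1) `Δ`-normal subspace,
`Δ = diag(b₁,b₂,b₃)`, with parameters `x, y`. -/
noncomputable def t1Basis (b₁ b₂ b₃ x y : ℂ) : Fin 5 → Matrix (Fin 3) (Fin 3) ℂ :=
  ![!![1, 0, 0; x, 0, 0; y, 0, 0],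
    !![1, 1, 0; bD3 b₁ b₂ b₃ * x, x, 0; bD2 b₁ b₂ b₃ * y, y, 0],
    !![0, 0, 1; 0, 0, 0; 0, 0, 0],
    !![0, 0, 0; bD3 b₁ b₂ b₃ / b₂, bD3 b₁ b₂ b₃, 1; 0, 0, 0],
    !![0, 0, 0; 0, 0, 0; bD2 b₁ b₂ b₃ / b₃, bD2 b₁ b₂ b₃, 1]]

/-- The type (T1) `Δ`-normal subspace with parameters `x, y`. -/
noncomputable def t1Normal (b₁ b₂ b₃ x y : ℂ) : Submodule ℂ (Matrix (Fin 3) (Fin 3) ℂ) :=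
  Submodule.span ℂ (Set.range (t1Basis b₁ b₂ b₃ x y))

/-- The five canonical generators of a type (T2) `Δ`-normal subspace,
`Δ = diag(b₁,b₂,b₃)`, with parameters `x, y, q, q'`. -/
noncomputable def t2Basis (b₁ b₂ b₃ x y q q' : ℂ) : Fin 5 → Matrix (Fin 3) (Fin 3) ℂ :=
  ![!![1, 0, 0; x, 0, 0; y, 0, 0],
    !![1, 1, 0; bD3 b₁ b₂ b₃ * x, x, 0; bD2 b₁ b₂ b₃ * y, y, 0],
    !![0, 0, 1; q', q, 0; q' * y / x + bD1 b₁ b₂ b₃ * q * y / x, q * y / x, 0],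
    !![0, 0, 0; bD3 b₁ b₂ b₃ / b₂ - q' / x, bD3 b₁ b₂ b₃ - q / x, 1; 0, 0, 0],
    !![0, 0, 0; 0, 0, 0;
       bD2 b₁ b₂ b₃ / b₃ - bD1 b₁ b₂ b₃ * q / x - q' / x, bD2 b₁ b₂ b₃ - q / x, 1]]

/-- The type (T2) `Δ`-normal subspace with parameters `x, y, q, q'`. -/
noncomputable def t2Normal (b₁ b₂ b₃ x y q q' : ℂ) :
    Submodule ℂ (Matrix (Fin 3) (Fin 3) ℂ) :=
  Submodule.span ℂ (Set.range (t2Basis b₁ b₂ b₃ x y q q'))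

/-- The five canonical generators of a strongly `Δ`-normal subspace,
`Δ = diag(b₁,b₂,b₃)`, with parameters `x, y, q`. -/
noncomputable def strongBasis (b₁ b₂ b₃ x y q : ℂ) : Fin 5 → Matrix (Fin 3) (Fin 3) ℂ :=
  ![!![1, 0, 0; x, 0, 0; y, 0, 0],
    !![0, 1, 0; bD3 b₁ b₂ b₃ * x, x, 0; bD2 b₁ b₂ b₃ * y, y, 0],
    !![0, 0, 1; q / b₂, q, 0; -y / (b₁ * b₃), -y / b₁, 0],
    !![0, 0, 0; 1 / b₂ ^ 2, 1 / b₂, 1; 0, 0, 0],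
    !![0, 0, 0; 0, 0, 0; 1 / b₃ ^ 2, 1 / b₃, 1]]

/-- The strongly `Δ`-normal subspace with parameters `x, y, q`. -/
noncomputable def strongNormal (b₁ b₂ b₃ x y q : ℂ) :
    Submodule ℂ (Matrix (Fin 3) (Fin 3) ℂ) :=
  Submodule.span ℂ (Set.range (strongBasis b₁ b₂ b₃ x y q))

/-- Deleting row `k` and column `l`, as a linear map `M₃(ℂ) → M₂(ℂ)`. -/
def delL (k l : Fin 3) : Matrix (Fin 3) (Fin 3) ℂ →ₗ[ℂ] Matrix (Fin 2) (Fin 2) ℂ where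
  toFun X := X.submatrix k.succAbove l.succAbove
  map_add' _ _ := rfl
  map_smul' _ _ := rfl

/-- The 3×3 lower Jordan cell. -/
def J3 : Matrix (Fin 3) (Fin 3) ℂ := !![0, 0, 0; 1, 0, 0; 0, 1, 0]

/-- Two adjacent cross-sections cannot both be of type (T1):
`P_{1,1}(L_r) ≠ P_{3,3}(L_{r+1})`. -/
theorem t1_t1_no_match (b : ℕ → ℂ) (r : ℕ)
    (hb : ∀ k, k ∈ Finset.Icc r (r + 3) → b k ≠ 0)
    (hbd : ∀ k l, k ∈ Finset.Icc r (r + 3) → l ∈ Finset.Icc r (r + 3) → k ≠ l → b k ≠ b l)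
    (xr yr xr' yr' : ℂ) (hxr : xr ≠ 0) (hyr : yr ≠ 0) (hxr' : xr' ≠ 0) (hyr' : yr' ≠ 0) :
    Submodule.map (delL 0 0) (t1Normal (b r) (b (r + 1)) (b (r + 2)) xr yr)
      ≠ Submodule.map (delL 2 2) (t1Normal (b (r + 1)) (b (r + 2)) (b (r + 3)) xr' yr') := by

  intro h
  set A := bD2 (b r) (b (r + 1)) (b (r + 2)) with hA
  have hbr : b r ≠ 0 := hb r (by simp)
  have hbr2 : b (r + 2) ≠ 0 := hb (r + 2) (by simp)
  have hE : (!![0, 0; A, 1] : Matrix (Fin 2) (Fin 2) ℂ)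
      ∈ Submodule.map (delL 0 0) (t1Normal (b r) (b (r + 1)) (b (r + 2)) xr yr) := by
    refine ⟨t1Basis (b r) (b (r + 1)) (b (r + 2)) xr yr 4,
      Submodule.subset_span ⟨4, rfl⟩, ?_⟩
    ext i j
    fin_cases i <;> fin_cases j <;>
      simp [delL, t1Basis, Matrix.submatrix, Fin.succAbove, hA]
  rw [h] at hE
  set B := bD3 (b (r + 1)) (b (r + 2)) (b (r + 3)) with hB
  have hg : (fun i => delL 2 2 (t1Basis (b (r + 1)) (b (r + 2)) (b (r + 3)) xr' yr' i))
      = ![!![1, 0; xr', 0], !![1, 1; B * xr', xr'], 0, !![0, 0; B / b (r + 2), B], 0] := by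
    funext i
    fin_cases i <;> (ext a c; fin_cases a <;> fin_cases c <;>
      simp [delL, t1Basis, Matrix.submatrix, Fin.succAbove, hB])
  rw [t1Normal, Submodule.map_span, ← Set.range_comp] at hE
  rw [show ((delL 2 2) ∘ t1Basis (b (r + 1)) (b (r + 2)) (b (r + 3)) xr' yr')
      = fun i => delL 2 2 (t1Basis (b (r + 1)) (b (r + 2)) (b (r + 3)) xr' yr' i) from rfl,
    hg, Submodule.mem_span_range_iff_exists_fun] at hE
  obtain ⟨c, hc⟩ := hE
  rw [Fin.sum_univ_five] at hc
  simp only [Matrix.cons_val_zero, Matrix.cons_val_one, Matrix.head_cons] at hc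
  have e00 := congrFun (congrFun hc 0) 0
  have e01 := congrFun (congrFun hc 0) 1
  have e10 := congrFun (congrFun hc 1) 0
  have e11 := congrFun (congrFun hc 1) 1
  simp [Matrix.add_apply, Matrix.smul_apply] at e00 e01 e10 e11
  have hc1 : c 1 = 0 := by simpa using e01
  have hc0 : c 0 = 0 := by rw [hc1] at e00; simpa using e00
  rw [hc1] at e10 e11
  simp at e10 e11
  -- e11 : c 3 * B = 1, e10 : c 3 * (B / b (r+2)) = A
  have hAval : A = 1 / b (r + 2) := by
    have h1 : c 3 * (B / b (r + 2)) = A := by rw [← e10, hc0]; ring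
    rw [← h1]
    field_simp
    linear_combination e11
  rw [hA, bD2] at hAval
  have : (1 : ℂ) / b r = 0 := by linear_combination -hAval
  simp [hbr] at this
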